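/- Let s₁, s₂, s₃ be pairwise distinct real numbers with s₂ + s₃ − 2s₁ ≠ 0, s₁ + s₃ − 2s₂ ≠ 0, and s₁ + s₂ − 2s₃ ≠ 0. Then the determinant of the 3×3 matrix with rows (1, 1, 1), (1/(s₂−s₃), 1/(s₃−s₁), 1/(s₁−s₂)), and (1/(s₂+s₃−2s₁), 1/(s₁+s₃−2s₂), 1/(s₁+s₂−2s₃)) equals 0. -/

import Mathlib

/-- The trilinears of `X₁`, `X₁₀₀`, `X₈₈` form a singular 3×3 matrix:
the three centers are collinear. -/
theorem stmt_14 (s₁ s₂ s₃ : ℝ)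
    (h12 : s₁ ≠ s₂) (h23 : s₂ ≠ s₃) (h13 : s₁ ≠ s₃)
    (k1 : s₂ + s₃ - 2 * s₁ ≠ 0) (k2 : s₁ + s₃ - 2 * s₂ ≠ 0)
    (k3 : s₁ + s₂ - 2 * s₃ ≠ 0) :
    Matrix.det
      !![(1 : ℝ), 1, 1;
         1 / (s₂ - s₃), 1 / (s₃ - s₁), 1 / (s₁ - s₂);
         1 / (s₂ + s₃ - 2 * s₁), 1 / (s₁ + s₃ - 2 * s₂), 1 / (s₁ + s₂ - 2 * s₃)]
      = 0 := by
  have d12 : s₁ - s₂ ≠ 0 := sub_ne_zero.mpr h12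
  have d23 : s₂ - s₃ ≠ 0 := sub_ne_zero.mpr h23
  have d31 : s₃ - s₁ ≠ 0 := sub_ne_zero.mpr h13.symm
  rw [Matrix.det_fin_three]
  norm_num [Matrix.cons_val_zero, Matrix.cons_val_one, Matrix.head_cons, Matrix.cons_val_two, Matrix.tail_cons]
  have e1 : s₂ + s₃ - s₁ * 2 ≠ 0 := by intro h; apply k1; linarith
  have e2 : s₁ + s₃ - s₂ * 2 ≠ 0 := by intro h; apply k2; linarith
  have e3 : s₁ + s₂ - s₃ * 2 ≠ 0 := by intro h; apply k3; linarith
  field_simp [e1, e2, e3]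
  ring
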